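/- Let G be a finite simple graph and let A and B be independent sets of G with |A| = |B| = s. Then A and B are TJ-reconfigurable if and only if A and B are TAR(s)-reconfigurable. -/

import Mathlib

variable {V : Type*} [DecidableEq V]

/-- `A` is an independent set of the graph `G`. -/
def IsIndep (G : SimpleGraph V) (A : Finset V) : Prop :=
  ∀ u ∈ A, ∀ v ∈ A, ¬G.Adj u v

/-- Two independent sets are TJ-adjacent (differ by one token jump). -/
def TJAdj (A B : Finset V) : Prop :=
  A.card = B.card ∧ (A \ B).card = 1 ∧ (B \ A).card = 1

/-- There is a TJ-reconfiguration sequence of length `ℓ` from `A` to `B` in `G`. -/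
def TJSeq (G : SimpleGraph V) (A B : Finset V) (ℓ : ℕ) : Prop :=
  ∃ ρ : ℕ → Finset V, ρ 0 = A ∧ ρ ℓ = B ∧ (∀ i ≤ ℓ, IsIndep G (ρ i)) ∧
    ∀ i < ℓ, TJAdj (ρ i) (ρ (i + 1))

/-- One TAR step: addition or removal of exactly one vertex. -/
def TARStep (A B : Finset V) : Prop :=
  (∃ v ∉ A, B = insert v A) ∨ (∃ v ∈ A, B = A.erase v)

/-- `ρ 0, …, ρ r` is a TAR(k)-reconfiguration sequence from `A` to `B` in `G`: all its
members are independent sets of size at least `k - 1`, and consecutive members differ by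
the addition or the removal of exactly one vertex. -/
def TARSeqFun (G : SimpleGraph V) (k : ℕ) (ρ : ℕ → Finset V) (r : ℕ)
    (A B : Finset V) : Prop :=
  ρ 0 = A ∧ ρ r = B ∧ (∀ i ≤ r, IsIndep G (ρ i) ∧ k - 1 ≤ (ρ i).card) ∧
    ∀ i < r, TARStep (ρ i) (ρ (i + 1))

/-- There is a TAR(k)-reconfiguration sequence of length `r` from `A` to `B` in `G`. -/
def TARSeq (G : SimpleGraph V) (k : ℕ) (A B : Finset V) (r : ℕ) : Prop :=
  ∃ ρ : ℕ → Finset V, TARSeqFun G k ρ r A B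

lemma isIndep_subset {G : SimpleGraph V} {A B : Finset V} (h : IsIndep G A) (hBA : B ⊆ A) :
    IsIndep G B :=
  fun u hu v hv => h u (hBA hu) v (hBA hv)

lemma card_of_adds {ρ : ℕ → Finset V} {j : ℕ}
    (h : ∀ i < j, ∃ v ∉ ρ i, ρ (i + 1) = insert v (ρ i)) :
    ∀ i ≤ j, (ρ i).card = (ρ 0).card + i := by
  intro i
  induction i with
  | zero => intro _; simp
  | succ n ih =>
    intro hn
    obtain ⟨v, hv, he⟩ := h n (by omega)
    rw [he, Finset.card_insert_of_notMem hv, ih (by omega)]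
    omega

lemma tj_prepend (G : SimpleGraph V) {A A' B : Finset V} {ℓ : ℕ}
    (hA : IsIndep G A) (hadj : TJAdj A A') (h : TJSeq G A' B ℓ) :
    TJSeq G A B (ℓ + 1) := by
  obtain ⟨ρ, h0, hE, hI, hS⟩ := h
  refine ⟨fun i => if i = 0 then A else ρ (i - 1), if_pos rfl, ?_, ?_, ?_⟩
  · simp only [if_neg (Nat.succ_ne_zero ℓ)]
    simpa using hE
  · intro i hi
    by_cases h : i = 0
    · simpa [h] using hA
    · simp only [if_neg h]
      exact hI (i - 1) (by omega)
  · intro i hi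
    by_cases h : i = 0
    · subst h
      simp only [if_pos rfl, if_neg one_ne_zero]
      simpa [h0] using hadj
    · simp only [if_neg h, if_neg (by omega : i + 1 ≠ 0)]
      have h1 : i - 1 + 1 = i := by omega
      have h2 := hS (i - 1) (by omega)
      rw [h1] at h2
      rw [Nat.add_sub_cancel]
      exact h2

lemma lemA (G : SimpleGraph V) (s L : ℕ) (B : Finset V) (hBs : B.card = s) :
    ∀ (j : ℕ) (ρ : ℕ → Finset V) (A : Finset V), TARSeqFun G s ρ L A B → A.card = s →
    (∀ i < j, ∃ v ∉ ρ i, ρ (i + 1) = insert v (ρ i)) →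
    j < L → (∃ v ∈ ρ j, ρ (j + 1) = (ρ j).erase v) →
    ∃ A', IsIndep G A' ∧ A'.card = s ∧ (A' = A ∨ TJAdj A A') ∧ TARSeq G s A' B (L - 2) := by
  intro j
  induction j with
  | zero =>
    rintro ρ A ⟨h0, hLB, hcond, hstep⟩ hAs _ hjL ⟨u, hu, hr⟩
    rw [h0] at hu hr
    have hs1 : 1 ≤ s := by rw [← hAs]; exact Finset.card_pos.mpr ⟨u, hu⟩
    have hc1 : (ρ 1).card = s - 1 := by rw [hr, Finset.card_erase_of_mem hu, hAs]
    have hL2 : 2 ≤ L := by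
      have : L ≠ 1 := by
        intro h
        rw [h] at hLB
        rw [hLB, hBs] at hc1
        omega
      omega
    rcases hstep 1 (by omega) with ⟨w, hw, h2⟩ | ⟨v, hv, h2⟩
    · -- step 1 is an addition
      rw [hr] at hw h2
      have hTAR2 : TARSeq G s (ρ 2) B (L - 2) := by
        refine ⟨fun i => ρ (i + 2), rfl, ?_, ?_, ?_⟩
        · show ρ (L - 2 + 2) = B
          rw [Nat.sub_add_cancel hL2]
          exact hLB
        · intro i hi; exact hcond (i + 2) (by omega)
        · intro i hi; exact hstep (i + 2) (by omega)
      by_cases hwu : w = u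
      · subst hwu
        have hAA : ρ 2 = A := by rw [h2, Finset.insert_erase hu]
        rw [hAA] at hTAR2
        exact ⟨A, h0 ▸ (hcond 0 (by omega)).1, hAs, Or.inl rfl, hTAR2⟩
      · have hwA : w ∉ A := fun h => hw (Finset.mem_erase.mpr ⟨hwu, h⟩)
        have hcard2 : (ρ 2).card = s := by
          rw [h2, Finset.card_insert_of_notMem hw, Finset.card_erase_of_mem hu, hAs]
          omega
        refine ⟨ρ 2, (hcond 2 (by omega)).1, hcard2, Or.inr ⟨?_, ?_, ?_⟩, hTAR2⟩
        · rw [hcard2, hAs]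
        · have hAd : A \ ρ 2 = {u} := by
            rw [h2]
            ext a
            simp only [Finset.mem_sdiff, Finset.mem_insert, Finset.mem_erase,
              Finset.mem_singleton]
            constructor
            · rintro ⟨ha, hna⟩
              push_neg at hna
              by_contra hne
              exact hna.2 hne ha
            · rintro rfl
              refine ⟨hu, ?_⟩
              push_neg
              exact ⟨fun h => hwA (h ▸ hu), fun h => absurd rfl h⟩
          rw [hAd, Finset.card_singleton]
        · have hAd : ρ 2 \ A = {w} := by
            rw [h2]
            ext a
            simp only [Finset.mem_sdiff, Finset.mem_insert, Finset.mem_erase,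
              Finset.mem_singleton]
            constructor
            · rintro ⟨ha | ⟨_, ha⟩, hna⟩
              · exact ha
              · exact absurd ha hna
            · rintro rfl
              exact ⟨Or.inl rfl, hwA⟩
          rw [hAd, Finset.card_singleton]
    · -- step 1 is a removal: impossible
      exfalso
      have hpos : 1 ≤ (ρ 1).card := Finset.card_pos.mpr ⟨v, hv⟩
      have hc2 : (ρ 2).card = (ρ 1).card - 1 := by
        rw [h2, Finset.card_erase_of_mem hv]
      have hb := (hcond 2 (by omega)).2
      omega
  | succ j IH =>
    rintro ρ A hT hAs hadd hjL hrem
    obtain ⟨h0, hLB, hcond, hstep⟩ := hT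
    obtain ⟨u, hu, hru⟩ := hrem
    obtain ⟨w, hw, haw⟩ := hadd j (by omega)
    have hcards : ∀ i ≤ j + 1, (ρ i).card = s + i := by
      intro i hi
      rw [card_of_adds hadd i hi, h0, hAs]
    by_cases hwu : w = u
    · -- cancel the addition at step j with the removal at step j+1
      subst hwu
      have hjj : ρ (j + 2) = ρ j := by rw [hru, haw, Finset.erase_insert hw]
      refine ⟨A, h0 ▸ (hcond 0 (by omega)).1, hAs, Or.inl rfl,
        fun i => if i ≤ j then ρ i else ρ (i + 2), ?_, ?_, ?_, ?_⟩
      · simp [h0]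
      · by_cases hc : L - 2 ≤ j
        · have hLj : L = j + 2 := by omega
          have hj' : L - 2 = j := by omega
          simp only [if_pos hc, hj']
          rw [← hjj, ← hLj]
          simpa using hLB
        · simp only [if_neg hc]
          rw [Nat.sub_add_cancel (by omega : 2 ≤ L)]
          exact hLB
      · intro i hi
        by_cases hc : i ≤ j
        · simp only [if_pos hc]; exact hcond i (by omega)
        · simp only [if_neg hc]; exact hcond (i + 2) (by omega)
      · intro i hi
        rcases lt_trichotomy i j with h | h | h
        · simp only [if_pos (by omega : i ≤ j), if_pos (by omega : i + 1 ≤ j)]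
          exact hstep i (by omega)
        · subst h
          simp only [if_pos le_rfl, if_neg (by omega : ¬ i + 1 ≤ i)]
          rw [← hjj]
          exact hstep (i + 2) (by omega)
        · simp only [if_neg (by omega : ¬ i ≤ j), if_neg (by omega : ¬ i + 1 ≤ j)]
          exact hstep (i + 2) (by omega)
    · -- swap the addition at step j with the removal at step j+1
      have huj : u ∈ ρ j := by
        rw [haw] at hu
        rcases Finset.mem_insert.mp hu with h | h
        · exact absurd h.symm hwu
        · exact h
      set σ : ℕ → Finset V := Function.update ρ (j + 1) ((ρ j).erase u) with hσ
      have hσeq : ∀ i, i ≠ j + 1 → σ i = ρ i := fun i hi => Function.update_of_ne hi _ _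
      have hσj : σ (j + 1) = (ρ j).erase u := Function.update_self _ _ _
      refine IH σ A ⟨?_, ?_, ?_, ?_⟩ hAs ?_ (by omega) ?_
      · rw [hσeq 0 (by omega)]; exact h0
      · rw [hσeq L (by omega)]; exact hLB
      · intro i hi
        by_cases hc : i = j + 1
        · subst hc
          rw [hσj]
          constructor
          · exact isIndep_subset (hcond j (by omega)).1 (Finset.erase_subset _ _)
          · rw [Finset.card_erase_of_mem huj, hcards j (by omega)]
            omega
        · rw [hσeq i hc]; exact hcond i hi
      · intro i hi
        rcases lt_trichotomy i j with h | h | h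
        · rw [hσeq i (by omega), hσeq (i + 1) (by omega)]
          exact hstep i (by omega)
        · subst h
          rw [hσeq i (by omega), hσj]
          exact Or.inr ⟨u, huj, rfl⟩
        · by_cases hc : i = j + 1
          · subst hc
            rw [hσj, hσeq (j + 1 + 1) (by omega), hru, haw,
              Finset.erase_insert_of_ne hwu]
            exact Or.inl ⟨w, fun h => hw (Finset.mem_of_mem_erase h), rfl⟩
          · rw [hσeq i hc, hσeq (i + 1) (by omega)]
            exact hstep i hi
      · intro i hi
        obtain ⟨v, hv, he⟩ := hadd i (by omega)
        rw [hσeq i (by omega), hσeq (i + 1) (by omega)]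
        exact ⟨v, hv, he⟩
      · refine ⟨u, ?_, ?_⟩
        · rw [hσeq j (by omega)]; exact huj
        · rw [hσj, hσeq j (by omega)]

lemma lemB (G : SimpleGraph V) (s : ℕ) :
    ∀ L (A B : Finset V), IsIndep G A → A.card = s → B.card = s →
      TARSeq G s A B L → ∃ ℓ, TJSeq G A B ℓ := by
  intro L
  induction L using Nat.strong_induction_on with
  | _ L IH =>
    intro A B hA hAs hBs hT
    obtain ⟨ρ, h0, hL, hcond, hstep⟩ := hT
    rcases Nat.eq_zero_or_pos L with hL0 | hLpos
    · subst hL0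
      have hAB : A = B := by rw [← h0, hL]
      exact ⟨0, fun _ => A, rfl, hAB, fun _ _ => hA, fun i hi => absurd hi (Nat.not_lt_zero i)⟩
    · classical
      have hex : ∃ j, j < L ∧ ∃ v ∈ ρ j, ρ (j + 1) = (ρ j).erase v := by
        by_contra hno
        push_neg at hno
        have hadds : ∀ i < L, ∃ v ∉ ρ i, ρ (i + 1) = insert v (ρ i) := by
          intro i hi
          rcases hstep i hi with h | ⟨v, hv, he⟩
          · exact h
          · exact absurd he (hno i hi v hv)
        have hc := card_of_adds hadds L le_rfl
        rw [h0, hL, hAs, hBs] at hc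
        omega
      have hspec := Nat.find_spec hex
      have haddsj : ∀ i < Nat.find hex, ∃ v ∉ ρ i, ρ (i + 1) = insert v (ρ i) := by
        intro i hi
        rcases hstep i (by omega : i < L) with h | h
        · exact h
        · exact absurd ⟨by omega, h⟩ (Nat.find_min hex hi)
      obtain ⟨A', hA'ind, hA's, hrel, hTAR'⟩ :=
        lemA G s L B hBs (Nat.find hex) ρ A ⟨h0, hL, hcond, hstep⟩ hAs haddsj hspec.1 hspec.2
      obtain ⟨ℓ, hTJ⟩ := IH (L - 2) (by omega) A' B hA'ind hA's hBs hTAR'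
      rcases hrel with rfl | hadj
      · exact ⟨ℓ, hTJ⟩
      · exact ⟨ℓ + 1, tj_prepend G hA hadj hTJ⟩

lemma tj_to_tar (G : SimpleGraph V) {A B : Finset V} {s ℓ : ℕ}
    (hAs : A.card = s) (h : TJSeq G A B ℓ) : TARSeq G s A B (2 * ℓ) := by
  obtain ⟨ρ, h0, hE, hI, hS⟩ := h
  have hcard : ∀ i ≤ ℓ, (ρ i).card = s := by
    intro i
    induction i with
    | zero => intro _; rw [h0, hAs]
    | succ n ih =>
      intro hn
      rw [← (hS n (by omega)).1, ih (by omega)]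
  refine ⟨fun j => if j % 2 = 0 then ρ (j / 2) else ρ (j / 2) ∩ ρ (j / 2 + 1), ?_, ?_, ?_, ?_⟩
  · norm_num [h0]
  · have h1 : (2 * ℓ) % 2 = 0 := by omega
    have h2 : (2 * ℓ) / 2 = ℓ := by omega
    simp only [h1, if_pos rfl, h2]
    exact hE
  · intro j hj
    by_cases hp : j % 2 = 0
    · simp only [if_pos hp]
      have hd : j / 2 ≤ ℓ := by omega
      exact ⟨hI _ hd, by rw [hcard _ hd]; omega⟩
    · simp only [if_neg hp]
      have h1 : j / 2 < ℓ := by omega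
      constructor
      · exact isIndep_subset (hI _ (by omega)) Finset.inter_subset_left
      · have h2 := Finset.card_inter_add_card_sdiff (ρ (j / 2)) (ρ (j / 2 + 1))
        have h3 := (hS _ h1).2.1
        have h4 := hcard (j / 2) (by omega)
        omega
  · intro j hj
    by_cases hp : j % 2 = 0
    · have hj1 : ¬ (j + 1) % 2 = 0 := by omega
      have hdiv : (j + 1) / 2 = j / 2 := by omega
      simp only [if_pos hp, if_neg hj1, hdiv]
      have h1 : j / 2 < ℓ := by omega
      obtain ⟨u, hu⟩ := Finset.card_eq_one.mp (hS _ h1).2.1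
      have hum : u ∈ ρ (j / 2) \ ρ (j / 2 + 1) := hu ▸ Finset.mem_singleton_self u
      refine Or.inr ⟨u, (Finset.mem_sdiff.mp hum).1, ?_⟩
      rw [Finset.erase_eq, ← hu, Finset.sdiff_sdiff_self_left]
    · have hj1 : (j + 1) % 2 = 0 := by omega
      have hdiv : (j + 1) / 2 = j / 2 + 1 := by omega
      simp only [if_neg hp, if_pos hj1, hdiv]
      have h1 : j / 2 < ℓ := by omega
      obtain ⟨v, hv⟩ := Finset.card_eq_one.mp (hS _ h1).2.2
      have hvm : v ∈ ρ (j / 2 + 1) \ ρ (j / 2) := hv ▸ Finset.mem_singleton_self v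
      rw [Finset.mem_sdiff] at hvm
      refine Or.inl ⟨v, fun hc => hvm.2 (Finset.mem_of_mem_inter_left hc), ?_⟩
      ext a
      simp only [Finset.mem_insert, Finset.mem_inter]
      constructor
      · intro ha
        by_cases hb : a ∈ ρ (j / 2)
        · exact Or.inr ⟨hb, ha⟩
        · left
          have : a ∈ ρ (j / 2 + 1) \ ρ (j / 2) := Finset.mem_sdiff.mpr ⟨ha, hb⟩
          rw [hv] at this
          exact Finset.mem_singleton.mp this
      · rintro (rfl | ⟨_, h2⟩)
        · exact hvm.1
        · exact h2

/-- two independent sets of size `s` in a finite simple graph are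
TJ-reconfigurable if and only if they are TAR(s)-reconfigurable. -/
theorem stmt8 {V : Type*} [DecidableEq V] [Fintype V] (G : SimpleGraph V)
    (A B : Finset V) (s : ℕ) (hA : IsIndep G A) (hB : IsIndep G B)
    (hAs : A.card = s) (hBs : B.card = s) :
    (∃ ℓ, TJSeq G A B ℓ) ↔ (∃ r, TARSeq G s A B r) := by
  constructor
  · rintro ⟨ℓ, hTJ⟩
    exact ⟨2 * ℓ, tj_to_tar G hAs hTJ⟩
  · rintro ⟨r, hTAR⟩
    exact lemB G s r A B hA hAs hBs hTAR
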